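/- Let F be a field, q ∈ F with q + 1 ≠ 0, and s, t ≥ 1 natural numbers. Then the determinant of the q-distance matrix D of the complete bipartite graph K_{s,t} equals (−1)^{s+t−2} (q+1)^{s+t−2} ((q+1)²(s−1)(t−1) − s·t), where s and t are cast into F. -/

import Mathlib

/-- The `q`-distance matrix of the complete bipartite graph `K_{s,t}`,
indexed by `Fin s ⊕ Fin t`: diagonal entries are `0`, entries between the two
parts are `1` (distance 1), and off-diagonal entries within a part are
`q + 1` (the `q`-integer `[2]`, distance 2). -/
def qDistKst (F : Type*) [Field F] (q : F) (s t : ℕ) :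
    Matrix (Fin s ⊕ Fin t) (Fin s ⊕ Fin t) F :=
  Matrix.of fun u v =>
    if u = v then 0 else if u.isLeft = v.isLeft then q + 1 else 1

theorem det_qDist_completeBipartite (F : Type*) [Field F] (q : F)
    (hq : q + 1 ≠ 0) (s t : ℕ) (hs : 1 ≤ s) (ht : 1 ≤ t) :
    (qDistKst F q s t).det =
      (-1) ^ (s + t - 2) * (q + 1) ^ (s + t - 2) *
        ((q + 1) ^ 2 * ((s : F) - 1) * ((t : F) - 1) - (s : F) * (t : F)) := by
  set c : F := -(q + 1) with hc
  have hc0 : c ≠ 0 := neg_ne_zero.mpr hq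
  set U : Matrix (Fin s ⊕ Fin t) (Fin 2) F :=
    Matrix.of (fun u j => if j = 0 then (if u.isLeft then 1 else 0)
      else (if u.isLeft then 0 else 1)) with hU
  set W : Matrix (Fin 2) (Fin s ⊕ Fin t) F :=
    Matrix.of (fun j u => if j = 0 then (if u.isLeft then q + 1 else 1)
      else (if u.isLeft then 1 else q + 1)) with hW
  have hD0 : qDistKst F q s t = c • (1 : Matrix (Fin s ⊕ Fin t) (Fin s ⊕ Fin t) F) + U * W := by
    ext u v
    simp only [qDistKst, Matrix.of_apply, Matrix.smul_apply, Matrix.add_apply,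
      Matrix.mul_apply, Fin.sum_univ_two, hU, hW, Matrix.one_apply, smul_eq_mul]
    rcases u with u | u <;> rcases v with v | v
    · by_cases h : u = v <;> simp [h, hc] <;> ring
    · simp
    · simp
    · by_cases h : u = v <;> simp [h, hc] <;> ring
  have hD : qDistKst F q s t = c • (1 + (c⁻¹ • U) * W) := by
    rw [smul_add, Matrix.smul_mul, smul_smul, mul_inv_cancel₀ hc0, one_smul, hD0]
  rw [hD, Matrix.det_smul, Matrix.det_one_add_mul_comm]
  have hWU : W * (c⁻¹ • U) = c⁻¹ • (W * U) := by
    rw [Matrix.mul_smul]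
  have hWUe : W * U = Matrix.of ![![(s : F) * (q + 1), (t : F)], ![(s : F), (t : F) * (q + 1)]] := by
    ext j u
    simp only [Matrix.mul_apply, hU, hW, Matrix.of_apply, Fintype.sum_sum_type]
    fin_cases j <;> fin_cases u <;>
      simp [Finset.sum_ite_eq, mul_comm] <;> ring
  rw [hWU, hWUe]
  rw [show (1 : Matrix (Fin 2) (Fin 2) F) + c⁻¹ • Matrix.of ![![(s : F) * (q + 1), (t : F)], ![(s : F), (t : F) * (q + 1)]]
      = Matrix.of ![![1 + c⁻¹ * ((s : F) * (q + 1)), c⁻¹ * (t : F)],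
          ![c⁻¹ * (s : F), 1 + c⁻¹ * ((t : F) * (q + 1))]] from by
    ext i j; fin_cases i <;> fin_cases j <;> simp [Matrix.one_apply]]
  rw [Matrix.det_fin_two]
  simp only [Matrix.of_apply, Matrix.cons_val', Matrix.cons_val_zero, Matrix.cons_val_one,
    Matrix.head_cons, Matrix.head_fin_const, Matrix.empty_val']
  have hcard : Fintype.card (Fin s ⊕ Fin t) = s + t := by simp
  rw [hcard]
  have hst : s + t = (s + t - 2) + 2 := by omega
  rw [hst, pow_add, hc]
  have h2 : (-(q+1)) ^ (s + t - 2) = (-1 : F) ^ (s+t-2) * (q+1)^(s+t-2) := by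
    rw [neg_pow]
  rw [h2]
  have hcinv : c⁻¹ = -((q + 1)⁻¹) := by rw [hc, inv_neg]
  rw [hcinv]
  simp only [Nat.add_sub_cancel]
  field_simp
  ring
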